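/- If X is a Lindelöf Hausdorff space, then d(X) ≤ πχ(X)^(c(X)). -/

import Mathlib

open Cardinal Set TopologicalSpace

universe u

/-- The density of a space: the least cardinality of a dense subset. -/
noncomputable def dens (X : Type u) [TopologicalSpace X] : Cardinal.{u} :=
  sInf {c : Cardinal.{u} | ∃ D : Set X, Dense D ∧ #D = c}

/-- A local π-base at a point: a family of nonempty open sets such that every
open set containing the point contains a member of the family. -/
def IsLocalPiBase (X : Type u) [TopologicalSpace X] (x : X) (𝒱 : Set (Set X)) : Prop :=
  (∀ V ∈ 𝒱, IsOpen V ∧ V.Nonempty) ∧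
    ∀ U : Set X, IsOpen U → x ∈ U → ∃ V ∈ 𝒱, V ⊆ U

/-- The π-character at a point: the least infinite cardinality of a local π-base. -/
noncomputable def piCharPoint (X : Type u) [TopologicalSpace X] (x : X) : Cardinal.{u} :=
  sInf {κ : Cardinal.{u} | ℵ₀ ≤ κ ∧ ∃ 𝒱 : Set (Set X), IsLocalPiBase X x 𝒱 ∧ #𝒱 ≤ κ}

/-- The π-character of a space. -/
noncomputable def piChar (X : Type u) [TopologicalSpace X] : Cardinal.{u} :=
  ⨆ x : X, piCharPoint X x

/-- A π-base for a space. -/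
def IsPiBase (X : Type u) [TopologicalSpace X] (𝒱 : Set (Set X)) : Prop :=
  (∀ V ∈ 𝒱, IsOpen V ∧ V.Nonempty) ∧
    ∀ U : Set X, IsOpen U → U.Nonempty → ∃ V ∈ 𝒱, V ⊆ U

/-- The π-weight of a space: the least infinite cardinality of a π-base. -/
noncomputable def piWeight (X : Type u) [TopologicalSpace X] : Cardinal.{u} :=
  sInf {κ : Cardinal.{u} | ℵ₀ ≤ κ ∧ ∃ 𝒱 : Set (Set X), IsPiBase X 𝒱 ∧ #𝒱 ≤ κ}

/-- The cellularity of a space: the least infinite cardinal bounding the size of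
every pairwise disjoint family of nonempty open sets. -/
noncomputable def cellularity (X : Type u) [TopologicalSpace X] : Cardinal.{u} :=
  sInf {κ : Cardinal.{u} | ℵ₀ ≤ κ ∧ ∀ 𝒞 : Set (Set X),
    (∀ U ∈ 𝒞, IsOpen U ∧ U.Nonempty) → 𝒞.PairwiseDisjoint id → #𝒞 ≤ κ}

/-- The set of infinite cardinals κ witnessing the nonquasiregularity degree:
every nonempty open set U contains a nonempty set ⋂₀ 𝒱 with 𝒱 an open family of
size at most κ and ⋂_{V ∈ 𝒱} cl V ⊆ U. -/
def nqSet (X : Type u) [TopologicalSpace X] : Set Cardinal.{u} :=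
  {κ : Cardinal.{u} | ℵ₀ ≤ κ ∧ ∀ U : Set X, IsOpen U → U.Nonempty →
    ∃ 𝒱 : Set (Set X), (∀ V ∈ 𝒱, IsOpen V) ∧ #𝒱 ≤ κ ∧
      (⋂₀ 𝒱).Nonempty ∧ (⋂ V ∈ 𝒱, closure V) ⊆ U}

/-- A space is an nq-space if its nonquasiregularity degree is defined. -/
def IsNqSpace (X : Type u) [TopologicalSpace X] : Prop :=
  (nqSet X).Nonempty

/-- The nonquasiregularity degree of a space. -/
noncomputable def nq (X : Type u) [TopologicalSpace X] : Cardinal.{u} :=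
  sInf (nqSet X)

/-- The closed pseudocharacter at a point. -/
noncomputable def psiCPoint (X : Type u) [TopologicalSpace X] (x : X) : Cardinal.{u} :=
  sInf {κ : Cardinal.{u} | ℵ₀ ≤ κ ∧ ∃ 𝒱 : Set (Set X),
    (∀ V ∈ 𝒱, IsOpen V ∧ x ∈ V) ∧ #𝒱 ≤ κ ∧ (⋂ V ∈ 𝒱, closure V) = {x}}

/-- The closed pseudocharacter of a space. -/
noncomputable def psiC (X : Type u) [TopologicalSpace X] : Cardinal.{u} :=
  sInf {κ : Cardinal.{u} | ℵ₀ ≤ κ ∧ ∀ x : X, ∃ 𝒱 : Set (Set X),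
    (∀ V ∈ 𝒱, IsOpen V ∧ x ∈ V) ∧ #𝒱 ≤ κ ∧ (⋂ V ∈ 𝒱, closure V) = {x}}

/-- The dense closed pseudocharacter of a space. -/
noncomputable def dPsiC (X : Type u) [TopologicalSpace X] : Cardinal.{u} :=
  sInf {κ : Cardinal.{u} | ℵ₀ ≤ κ ∧ ∃ D : Set X, Dense D ∧ ∀ d ∈ D, psiCPoint X d ≤ κ}

/-- The weak closed pseudocharacter at a point: the least infinite cardinality of a
family 𝒱 of open sets with ⋂_{V ∈ 𝒱} cl V = {x}. -/
noncomputable def wPsiCPoint (X : Type u) [TopologicalSpace X] (x : X) : Cardinal.{u} :=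
  sInf {κ : Cardinal.{u} | ℵ₀ ≤ κ ∧ ∃ 𝒱 : Set (Set X),
    (∀ V ∈ 𝒱, IsOpen V) ∧ #𝒱 ≤ κ ∧ (⋂ V ∈ 𝒱, closure V) = {x}}

/-- The weak closed pseudocharacter of a space. -/
noncomputable def wPsiC (X : Type u) [TopologicalSpace X] : Cardinal.{u} :=
  ⨆ x : X, wPsiCPoint X x

/-- The pseudocharacter of a space: the least infinite cardinal κ such that every
point is the intersection of at most κ open sets. -/
noncomputable def psi (X : Type u) [TopologicalSpace X] : Cardinal.{u} :=
  sInf {κ : Cardinal.{u} | ℵ₀ ≤ κ ∧ ∀ x : X, ∃ 𝒱 : Set (Set X),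
    (∀ V ∈ 𝒱, IsOpen V) ∧ #𝒱 ≤ κ ∧ ⋂₀ 𝒱 = {x}}

/-- The Lindelöf degree of a space. -/
noncomputable def lindelofDegree (X : Type u) [TopologicalSpace X] : Cardinal.{u} :=
  sInf {κ : Cardinal.{u} | ℵ₀ ≤ κ ∧ ∀ 𝒰 : Set (Set X), (∀ U ∈ 𝒰, IsOpen U) →
    ⋃₀ 𝒰 = Set.univ → ∃ 𝒱 ⊆ 𝒰, #𝒱 ≤ κ ∧ ⋃₀ 𝒱 = Set.univ}

/-- The cardinality of the collection of regular open subsets of a space. -/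
noncomputable def cardRO (X : Type u) [TopologicalSpace X] : Cardinal.{u} :=
  #{R : Set X | R = interior (closure R)}

/-- A space is quasiregular if every nonempty open set contains a nonempty open
set whose closure is contained in it. -/
def Quasiregular (X : Type u) [TopologicalSpace X] : Prop :=
  ∀ U : Set X, IsOpen U → U.Nonempty →
    ∃ V : Set X, IsOpen V ∧ V.Nonempty ∧ closure V ⊆ U





section Aux

variable {X : Type u} [TopologicalSpace X]

/-- Cellularity selection: from any family of open sets one can select a subfamily of size
at most the cellularity whose union is dense in the union of the family. -/
lemma aux_cell_select {κ : Cardinal.{u}}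
    (hκ : ∀ 𝒞 : Set (Set X), (∀ U ∈ 𝒞, IsOpen U ∧ U.Nonempty) → 𝒞.PairwiseDisjoint id → #𝒞 ≤ κ)
    (𝒪 : Set (Set X)) (h𝒪 : ∀ O ∈ 𝒪, IsOpen O) :
    ∃ 𝒮 ⊆ 𝒪, #𝒮 ≤ κ ∧ ⋃₀ 𝒪 ⊆ closure (⋃₀ 𝒮) := by
  classical
  set P : Set (Set (Set X)) :=
    {𝒟 | 𝒟.PairwiseDisjoint id ∧ ∀ D ∈ 𝒟, IsOpen D ∧ D.Nonempty ∧ ∃ O ∈ 𝒪, D ⊆ O} with hP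
  obtain ⟨𝒟, h𝒟max⟩ : ∃ m, Maximal (· ∈ P) m := by
    apply zorn_subset
    intro c hcP hchain
    refine ⟨⋃₀ c, ⟨?_, ?_⟩, fun s hs => subset_sUnion_of_mem hs⟩
    · rintro a ⟨da, hda, ha⟩ b ⟨db, hdb, hb⟩ hab
      rcases hchain.total hda hdb with h | h
      · exact (hcP hdb).1 (h ha) hb hab
      · exact (hcP hda).1 ha (h hb) hab
    · rintro D ⟨d, hd, hD⟩
      exact (hcP hd).2 D hD
  have h𝒟P : 𝒟 ∈ P := h𝒟max.1
  have hOch : ∀ D : ↥𝒟, ∃ O, O ∈ 𝒪 ∧ (D : Set X) ⊆ O := by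
    intro D
    obtain ⟨-, -, O, hO, hDO⟩ := h𝒟P.2 D D.2
    exact ⟨O, hO, hDO⟩
  choose f hf1 hf2 using hOch
  refine ⟨Set.range f, ?_, mk_range_le.trans (hκ 𝒟 (fun D hD => ⟨(h𝒟P.2 D hD).1, (h𝒟P.2 D hD).2.1⟩) h𝒟P.1), ?_⟩
  · rintro O ⟨D, rfl⟩; exact hf1 D
  · rintro z ⟨O₀, hO₀, hzO₀⟩
    rw [mem_closure_iff]
    intro o ho hzo
    have hGne : (o ∩ O₀).Nonempty := ⟨z, hzo, hzO₀⟩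
    have : ∃ D ∈ 𝒟, ((o ∩ O₀) ∩ D).Nonempty := by
      by_contra hcon
      push_neg at hcon
      have hGP : insert (o ∩ O₀) 𝒟 ∈ P := by
        constructor
        · refine h𝒟P.1.insert ?_
          intro D hD _
          exact Set.disjoint_iff_inter_eq_empty.mpr (hcon D hD)
        · rintro D (rfl | hD)
          · exact ⟨ho.inter (h𝒪 O₀ hO₀), hGne, O₀, hO₀, inter_subset_right⟩
          · exact h𝒟P.2 D hD
      have hsub : insert (o ∩ O₀) 𝒟 ⊆ 𝒟 := h𝒟max.2 hGP (subset_insert _ _)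
      have hmem : (o ∩ O₀) ∈ 𝒟 := hsub (mem_insert _ _)
      have := hcon _ hmem
      rw [inter_self] at this
      exact hGne.ne_empty (by simpa using this)
    obtain ⟨D, hD, w, hwG, hwD⟩ := this
    exact ⟨w, hwG.1, f ⟨D, hD⟩, ⟨⟨D, hD⟩, rfl⟩, hf2 ⟨D, hD⟩ hwD⟩

/-- In a Lindelöf Hausdorff space, around any point of an open set there is a countable
family of open neighbourhoods whose closures intersect inside the open set. -/
lemma aux_lindelof [LindelofSpace X] [T2Space X] {U : Set X} (hU : IsOpen U) {x : X}
    (hx : x ∈ U) :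
    ∃ W : ℕ → Set X, (∀ n, IsOpen (W n)) ∧ (∀ n, x ∈ W n) ∧ (⋂ n, closure (W n)) ⊆ U := by
  have hsep : ∀ y : ↥(Uᶜ), ∃ A : Set X, ∃ B : Set X,
      IsOpen A ∧ IsOpen B ∧ x ∈ A ∧ (y : X) ∈ B ∧ Disjoint A B := by
    intro y
    have hxy : x ≠ (y : X) := fun h => y.2 (h ▸ hx)
    obtain ⟨A, B, hA, hB, hxA, hyB, hAB⟩ := t2_separation hxy
    exact ⟨A, B, hA, hB, hxA, hyB, hAB⟩
  choose A B hA hB hxA hyB hAB using hsep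
  have hLin : IsLindelof (Uᶜ) := hU.isClosed_compl.isLindelof
  have hcov : Uᶜ ⊆ ⋃ y : ↥(Uᶜ), B y := fun z hz => mem_iUnion.mpr ⟨⟨z, hz⟩, hyB ⟨z, hz⟩⟩
  obtain ⟨r, hrc, hrcov⟩ := hLin.elim_countable_subcover B hB hcov
  rcases r.eq_empty_or_nonempty with hre | hrne
  · have hUuniv : U = Set.univ := by
      rw [hre] at hrcov
      simp only [Set.mem_empty_iff_false, Set.iUnion_of_empty, Set.iUnion_empty] at hrcov
      rw [← compl_empty_iff]
      exact subset_empty_iff.mp (by simpa using hrcov)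
    exact ⟨fun _ => Set.univ, fun _ => isOpen_univ, fun _ => Set.mem_univ x, by simp [hUuniv]⟩
  · obtain ⟨f, hf⟩ := hrc.exists_eq_range hrne
    refine ⟨fun n => A (f n), fun n => hA _, fun n => hxA _, ?_⟩
    intro z hz
    by_contra hzU
    have hzcov := hrcov hzU
    rw [mem_iUnion₂] at hzcov
    obtain ⟨y, hyr, hzB⟩ := hzcov
    rw [hf] at hyr
    obtain ⟨n, rfl⟩ := hyr
    have hzA : z ∈ closure (A (f n)) := by
      simp only [mem_iInter] at hz
      exact hz n
    have hcl : closure (A (f n)) ⊆ (B (f n))ᶜ :=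
      closure_minimal (fun w hw => Set.disjoint_left.mp (hAB (f n)) hw) (hB (f n)).isClosed_compl
    exact hcl hzA hzB

end Aux



set_option linter.unusedSectionVars false
section Aux2

variable {X : Type u} [TopologicalSpace X]

/-- The union of chosen local π-bases over a set of points. -/
def auxW (Vb : X → Set (Set X)) (A : Set X) : Set (Set X) := ⋃ x ∈ A, Vb x

/-- The "bad sequences" relative to a set of points: sequences of small subfamilies of the
π-bases whose unions' closures do not cover the space. -/
def auxBad (Vb : X → Set (Set X)) (κ : Cardinal.{u}) (A : Set X) : Set (ℕ → Set (Set X)) :=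
  {s | (∀ n, s n ⊆ auxW Vb A ∧ #(s n) ≤ κ) ∧ (⋃ n, closure (⋃₀ s n)) ≠ Set.univ}

/-- One step of the construction: add a witness point for every bad sequence. -/
noncomputable def auxG (Vb : X → Set (Set X)) (κ : Cardinal.{u})
    (wit : (ℕ → Set (Set X)) → X) (A : Set X) : Set X :=
  A ∪ wit '' auxBad Vb κ A

/-- The transfinite iteration of `auxG` along an ordinal. -/
noncomputable def auxD (Vb : X → Set (Set X)) (κ : Cardinal.{u})
    (wit : (ℕ → Set (Set X)) → X) (O : Ordinal.{u}) : O.ToType → Set X :=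
  (wellFounded_lt (α := O.ToType)).fix
    (fun i ih => auxG Vb κ wit (⋃ j : {j // j < i}, ih j j.2))

variable {Vb : X → Set (Set X)} {κ : Cardinal.{u}} {wit : (ℕ → Set (Set X)) → X}
  {O : Ordinal.{u}}

lemma auxD_eq (i : O.ToType) :
    auxD Vb κ wit O i = auxG Vb κ wit (⋃ j : {j // j < i}, auxD Vb κ wit O j) :=
  WellFounded.fix_eq _ _ i

lemma auxD_mono {j i : O.ToType} (h : j ≤ i) : auxD Vb κ wit O j ⊆ auxD Vb κ wit O i := by
  rcases eq_or_lt_of_le h with rfl | h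
  · exact subset_rfl
  · rw [auxD_eq i]
    refine subset_trans ?_ subset_union_left
    exact subset_iUnion_of_subset (⟨j, h⟩ : {j // j < i}) subset_rfl

lemma auxW_mono {A B : Set X} (h : A ⊆ B) : auxW Vb A ⊆ auxW Vb B := by
  intro V hV
  obtain ⟨x, hx, hVx⟩ := mem_iUnion₂.mp hV
  exact mem_iUnion₂.mpr ⟨x, h hx, hVx⟩

lemma auxW_card {π μ : Cardinal.{u}} (hVb : ∀ x, #(Vb x) ≤ π) (hπμ : π ≤ μ) (hμ : ℵ₀ ≤ μ)
    {A : Set X} (hA : #A ≤ μ) : #(auxW Vb A) ≤ μ := by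
  refine (mk_biUnion_le _ _).trans ?_
  refine le_trans (mul_le_mul' hA (ciSup_le' fun x => (hVb x.1).trans hπμ)) ?_
  rw [mul_eq_self hμ]

lemma auxBad_card {π μ : Cardinal.{u}} (hVb : ∀ x, #(Vb x) ≤ π) (hπμ : π ≤ μ) (hμ : ℵ₀ ≤ μ)
    (hμκ : μ ^ κ = μ) (hμℵ : μ ^ ℵ₀ = μ) {A : Set X} (hA : #A ≤ μ) : #(auxBad Vb κ A) ≤ μ := by
  have hT : #{t : Set (Set X) // t ⊆ auxW Vb A ∧ #t ≤ κ} ≤ μ := by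
    refine (mk_bounded_subset_le _ κ).trans ?_
    have hm : max #(auxW Vb A) ℵ₀ ≤ μ := max_le (auxW_card hVb hπμ hμ hA) hμ
    calc (max #(auxW Vb A) ℵ₀) ^ κ ≤ μ ^ κ := power_le_power_right hm
      _ = μ := hμκ
  have hinj : #(auxBad Vb κ A) ≤ #(ℕ → {t : Set (Set X) // t ⊆ auxW Vb A ∧ #t ≤ κ}) := by
    refine mk_le_of_injective (f := fun s : ↥(auxBad Vb κ A) =>
      fun n => (⟨s.1 n, s.2.1 n⟩ : {t : Set (Set X) // t ⊆ auxW Vb A ∧ #t ≤ κ})) ?_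
    intro s1 s2 h
    apply Subtype.ext; funext n
    exact congrArg Subtype.val (congrFun h n)
  refine hinj.trans ?_
  rw [mk_arrow]
  simp only [Cardinal.lift_uzero, mk_nat, lift_aleph0]
  calc #{t : Set (Set X) // t ⊆ auxW Vb A ∧ #t ≤ κ} ^ ℵ₀ ≤ μ ^ ℵ₀ := power_le_power_right hT
    _ = μ := hμℵ

lemma auxG_card {π μ : Cardinal.{u}} (hVb : ∀ x, #(Vb x) ≤ π) (hπμ : π ≤ μ) (hμ : ℵ₀ ≤ μ)
    (hμκ : μ ^ κ = μ) (hμℵ : μ ^ ℵ₀ = μ) {A : Set X} (hA : #A ≤ μ) :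
    #(auxG Vb κ wit A) ≤ μ := by
  refine (mk_union_le _ _).trans ?_
  have h2 : #(wit '' auxBad Vb κ A) ≤ μ :=
    mk_image_le.trans (auxBad_card hVb hπμ hμ hμκ hμℵ hA)
  calc #A + #(wit '' auxBad Vb κ A) ≤ μ + μ := add_le_add hA h2
    _ = μ := add_eq_self hμ

lemma auxD_card {π μ : Cardinal.{u}} (hVb : ∀ x, #(Vb x) ≤ π) (hπμ : π ≤ μ) (hμ : ℵ₀ ≤ μ)
    (hμκ : μ ^ κ = μ) (hμℵ : μ ^ ℵ₀ = μ) (hκμ : κ ≤ μ)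
    (hO : ∀ i : O.ToType, #{j : O.ToType // j < i} ≤ κ) (i : O.ToType) :
    #(auxD Vb κ wit O i) ≤ μ := by
  refine (wellFounded_lt (α := O.ToType)).induction
    (C := fun i => #(auxD Vb κ wit O i) ≤ μ) i ?_
  intro i ih
  rw [auxD_eq i]
  refine auxG_card hVb hπμ hμ hμκ hμℵ ?_
  refine (mk_iUnion_le _).trans ?_
  have h1 : #{j : O.ToType // j < i} ≤ μ := (hO i).trans hκμ
  have h2 : ⨆ j : {j : O.ToType // j < i}, #(auxD Vb κ wit O j.1) ≤ μ :=
    ciSup_le' fun j => ih j.1 j.2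
  calc #{j : O.ToType // j < i} * ⨆ j : {j : O.ToType // j < i}, #(auxD Vb κ wit O j.1)
      ≤ μ * μ := mul_le_mul' h1 h2
    _ = μ := mul_eq_self hμ

end Aux2



/-- If `X` is Lindelöf and Hausdorff then `d(X) ≤ πχ(X)^(c(X))`. -/
theorem stmt_18 (X : Type u) [TopologicalSpace X] [LindelofSpace X] [T2Space X] :
    dens X ≤ piChar X ^ cellularity X := by
  classical
  rcases isEmpty_or_nonempty X with hX | hX
  · have h0 : dens X ≤ #(Set.univ : Set X) := csInf_le' ⟨Set.univ, dense_univ, rfl⟩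
    rw [Cardinal.mk_univ, Cardinal.mk_eq_zero] at h0
    exact h0.trans zero_le
  set κ := cellularity X with hκdef
  set π := piChar X with hπdef
  -- basic facts about the cellularity
  have hκmem : κ ∈ {c : Cardinal.{u} | ℵ₀ ≤ c ∧ ∀ 𝒞 : Set (Set X),
      (∀ U ∈ 𝒞, IsOpen U ∧ U.Nonempty) → 𝒞.PairwiseDisjoint id → #𝒞 ≤ c} := by
    rw [hκdef]
    exact csInf_mem ⟨max ℵ₀ (2 ^ #X), le_max_left _ _,
      fun 𝒞 _ _ => le_max_of_le_right ((mk_set_le 𝒞).trans_eq mk_set)⟩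
  obtain ⟨hκℵ, hκcell⟩ := hκmem
  -- basic facts about the π-character
  have hpx : ∀ x : X, piCharPoint X x ∈ {c : Cardinal.{u} | ℵ₀ ≤ c ∧ ∃ 𝒱 : Set (Set X),
      IsLocalPiBase X x 𝒱 ∧ #𝒱 ≤ c} := by
    intro x
    exact csInf_mem ⟨max ℵ₀ (2 ^ #X), le_max_left _ _, {V : Set X | IsOpen V ∧ V.Nonempty},
      ⟨fun V hV => hV, fun U hU hxU => ⟨U, ⟨hU, ⟨x, hxU⟩⟩, subset_rfl⟩⟩,
      le_max_of_le_right ((mk_set_le _).trans_eq mk_set)⟩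
  have hpcp : ∀ x : X, piCharPoint X x ≤ π :=
    fun x => hπdef ▸ le_ciSup (Cardinal.bddAbove_range _) x
  have hπℵ : ℵ₀ ≤ π := (hpx hX.some).1.trans (hpcp hX.some)
  have hVbex : ∀ x : X, ∃ 𝒱 : Set (Set X), IsLocalPiBase X x 𝒱 ∧ #𝒱 ≤ π := by
    intro x
    obtain ⟨𝒱, h1, h2⟩ := (hpx x).2
    exact ⟨𝒱, h1, h2.trans (hpcp x)⟩
  choose Vb hVb1 hVb2 using hVbex
  -- cardinal arithmetic for μ = π ^ κ
  set μ := π ^ κ with hμdef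
  have hπ0 : π ≠ 0 := (aleph0_pos.trans_le hπℵ).ne'
  have h2π : (2 : Cardinal) ≤ π := le_trans (by exact_mod_cast (nat_lt_aleph0 2).le) hπℵ
  have hπμ : π ≤ μ := by
    conv_lhs => rw [← power_one π]
    exact power_le_power_left hπ0 (one_le_aleph0.trans hκℵ)
  have hμℵ : ℵ₀ ≤ μ := hπℵ.trans hπμ
  have hκltμ : κ < μ := (cantor κ).trans_le (power_le_power_right h2π)
  have hμκpow : μ ^ κ = μ := by rw [hμdef, ← power_mul, mul_eq_self hκℵ]
  have hμℵpow : μ ^ ℵ₀ = μ := by rw [hμdef, ← power_mul, mul_aleph0_eq hκℵ]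
  have hsucc : Order.succ κ ≤ μ := Order.succ_le_of_lt hκltμ
  -- the ordinal frame
  set O : Ordinal.{u} := (Order.succ κ).ord with hO
  have hIcard : #O.ToType = Order.succ κ := by rw [Cardinal.mk_toType, hO, card_ord]
  have hIinit : ∀ i : O.ToType, #{j : O.ToType // j < i} ≤ κ := by
    intro i
    have h1 := Cardinal.mk_Iio_ord_toType i
    exact Order.lt_succ_iff.mp h1
  -- the witness function
  obtain ⟨wit, hwit⟩ : ∃ wit : (ℕ → Set (Set X)) → X, ∀ s : ℕ → Set (Set X),
      (⋃ n, closure (⋃₀ s n)) ≠ Set.univ → wit s ∉ ⋃ n, closure (⋃₀ s n) := by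
    refine ⟨fun s => if h : (⋃ n, closure (⋃₀ s n)) ≠ Set.univ then
      (Set.nonempty_compl.mpr h).choose else hX.some, fun s h => ?_⟩
    simp only [dif_pos h]
    exact (Set.nonempty_compl.mpr h).choose_spec
  -- the construction
  set D : O.ToType → Set X := auxD Vb κ wit O with hDdef
  set Df : Set X := ⋃ i : O.ToType, D i with hDf
  have hDcard : ∀ i, #(D i) ≤ μ :=
    auxD_card hVb2 hπμ hμℵ hμκpow hμℵpow hκltμ.le hIinit
  have hDfcard : #Df ≤ μ := by
    rw [hDf]
    refine (mk_iUnion_le _).trans ?_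
    calc #O.ToType * ⨆ i, #(D i) ≤ μ * μ :=
        mul_le_mul' (hIcard ▸ hsucc) (ciSup_le' hDcard)
      _ = μ := mul_eq_self hμℵ
  -- density of the constructed set
  have hdense : Dense Df := by
    by_contra hnd
    have hne : ((closure Df)ᶜ).Nonempty := by
      rw [Set.nonempty_compl]
      intro h
      exact hnd (dense_iff_closure_eq.mpr h)
    obtain ⟨x, hx⟩ := hne
    obtain ⟨W, hWopen, hxW, hWsub⟩ := aux_lindelof isClosed_closure.isOpen_compl hx
    -- the families to be selected from
    set 𝒪 : ℕ → Set (Set X) := fun n => {V | V ∈ auxW Vb Df ∧ V ⊆ (closure (W n))ᶜ} with h𝒪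
    have h𝒲open : ∀ V ∈ auxW Vb Df, IsOpen V ∧ V.Nonempty := by
      intro V hV
      obtain ⟨x', _, hVx'⟩ := mem_iUnion₂.mp hV
      exact (hVb1 x').1 V hVx'
    have hsel : ∀ n, ∃ 𝒮 ⊆ 𝒪 n, #𝒮 ≤ κ ∧ ⋃₀ (𝒪 n) ⊆ closure (⋃₀ 𝒮) :=
      fun n => aux_cell_select hκcell (𝒪 n) (fun V hV => (h𝒲open V hV.1).1)
    choose 𝒮 h𝒮sub h𝒮card h𝒮cl using hsel
    -- x is not in the closure of any selected union
    have hxS : ∀ n, x ∉ closure (⋃₀ 𝒮 n) := by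
      intro n hxn
      rw [mem_closure_iff] at hxn
      obtain ⟨z, hzW, V, hV𝒮, hzV⟩ := hxn (W n) (hWopen n) (hxW n)
      exact (h𝒮sub n hV𝒮).2 hzV (subset_closure hzW)
    -- every point of Df is in the closure of some selected union
    have hcover : ∀ x' ∈ Df, ∃ n, x' ∈ closure (⋃₀ 𝒮 n) := by
      intro x' hx'
      have hx'cl : x' ∈ closure Df := subset_closure hx'
      have hnotin : x' ∉ ⋂ n, closure (W n) := fun h => (hWsub h) hx'cl
      obtain ⟨n, hn⟩ : ∃ n, x' ∉ closure (W n) := by simpa [mem_iInter] using hnotin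
      refine ⟨n, ?_⟩
      have hsubfam : ⋃₀ {V | V ∈ Vb x' ∧ V ⊆ (closure (W n))ᶜ} ⊆ ⋃₀ 𝒪 n := by
        rintro z ⟨V, ⟨hV1, hV2⟩, hzV⟩
        exact ⟨V, ⟨mem_iUnion₂.mpr ⟨x', hx', hV1⟩, hV2⟩, hzV⟩
      have hx'mem : x' ∈ closure (⋃₀ {V | V ∈ Vb x' ∧ V ⊆ (closure (W n))ᶜ}) := by
        rw [mem_closure_iff]
        intro o ho hx'o
        obtain ⟨V, hV, hVsub⟩ := (hVb1 x').2 (o ∩ (closure (W n))ᶜ)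
          (ho.inter isClosed_closure.isOpen_compl) ⟨hx'o, hn⟩
        obtain ⟨v, hv⟩ := ((hVb1 x').1 V hV).2
        exact ⟨v, (hVsub hv).1, V, ⟨hV, fun z hz => (hVsub hz).2⟩, hv⟩
      have h1 : x' ∈ closure (⋃₀ 𝒪 n) := closure_mono hsubfam hx'mem
      exact closure_minimal (h𝒮cl n) isClosed_closure h1
    -- every selected element appears at some stage
    have h𝒮𝒲 : ∀ n, ∀ V ∈ 𝒮 n, ∃ i : O.ToType, V ∈ auxW Vb (D i) := by
      intro n V hV
      obtain ⟨x', hx', hVx'⟩ := mem_iUnion₂.mp (h𝒮sub n hV).1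
      obtain ⟨i, hi⟩ := mem_iUnion.mp hx'
      exact ⟨i, mem_iUnion₂.mpr ⟨x', hi, hVx'⟩⟩
    have hchoice : ∀ p : (Σ n : ULift.{u} ℕ, ↥(𝒮 n.down)),
        ∃ i : O.ToType, (p.2 : Set X) ∈ auxW Vb (D i) :=
      fun p => h𝒮𝒲 p.1.down p.2 p.2.2
    choose idx hidx using hchoice
    -- all stages used are bounded
    have hbd : Set.Bounded (· < ·) (Set.range idx) := by
      haveI : IsWellOrder O.ToType (· < ·) := isWellOrder_lt
      suffices hlt : #(Set.range idx) < O.cof by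
        by_contra hnb
        have hcf : IsCofinal (Set.range idx) := by
          intro a; by_contra ha; push_neg at ha; exact hnb ⟨a, ha⟩
        exact (not_le.mpr hlt) (Ordinal.cof_toType O ▸ Order.cof_le hcf)
      have h1 : #(Set.range idx) ≤ κ := by
        refine mk_range_le.trans ?_
        rw [mk_sigma]
        refine le_trans (sum_le_sum _ (fun _ => κ) fun n => h𝒮card n.down) ?_
        rw [sum_const']
        have hn : #(ULift.{u} ℕ) = ℵ₀ := by simp
        rw [hn, aleph0_mul_eq hκℵ]
      refine h1.trans_lt ?_
      rw [hO, (isRegular_succ hκℵ).cof_eq]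
      exact Order.lt_succ κ
    obtain ⟨iB, hiB⟩ := hbd
    set A : Set X := ⋃ j : {j : O.ToType // j < iB}, D j.1 with hA
    have h𝒮A : ∀ n, 𝒮 n ⊆ auxW Vb A := by
      intro n V hV
      have h := hidx ⟨ULift.up n, ⟨V, hV⟩⟩
      have hlt : idx ⟨ULift.up n, ⟨V, hV⟩⟩ < iB := hiB _ (Set.mem_range_self _)
      refine auxW_mono ?_ h
      intro y hy
      exact mem_iUnion.mpr ⟨⟨_, hlt⟩, hy⟩
    have hsBad : (fun n => 𝒮 n) ∈ auxBad Vb κ A := by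
      refine ⟨fun n => ⟨h𝒮A n, h𝒮card n⟩, ?_⟩
      rw [Set.ne_univ_iff_exists_notMem]
      refine ⟨x, fun hmem => ?_⟩
      obtain ⟨n, hn⟩ := mem_iUnion.mp hmem
      exact hxS n hn
    have hwitD : wit (fun n => 𝒮 n) ∈ D iB := by
      rw [hDdef, auxD_eq iB]
      exact Or.inr ⟨fun n => 𝒮 n, hsBad, rfl⟩
    obtain ⟨n, hn⟩ := hcover _ (mem_iUnion.mpr ⟨iB, hwitD⟩)
    exact hwit _ hsBad.2 (mem_iUnion.mpr ⟨n, hn⟩)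
  calc dens X ≤ #Df := csInf_le' ⟨Df, hdense, rfl⟩
    _ ≤ μ := hDfcard
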